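/- Let N ≥ 1, m ≥ 1, let Λ_1 ≥ Λ_2 ≥ ... ≥ Λ_N > 0 be real numbers, set q := min(m, N), and let r be the Witsenhausen index of (Λ_1,...,Λ_q). Let S ⊆ {1,...,N} be a subset with {1,...,r} ⊆ S. Define the greedy allocation over S recursively: n^{(0)} = (0,...,0), and n^{(t+1)} is obtained from n^{(t)} by adding 1 to coordinate i_t, where i_t is the smallest index i ∈ S minimizing 1/Λ_i + n^{(t)}_i/m. Then Π_{i=1}^N (1 + Λ_i n^{(m)}_i/m) = max { Π_{i=1}^N (1 + Λ_i n_i/m) : n ∈ ℕ^N, Σ_i n_i = m, and n_i = 0 for all i ∉ S }; that is, the greedy allocation attains the maximum value over all integer allocations supported on S. -/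
import Mathlib


open scoped Classical in
/-- The index (smallest, among those of lowest current height `1/Λ_i + n_i/m`)
in `S` to which the greedy block-filling policy adds the next block. -/
noncomputable def greedyStep (Λ : ℕ → ℝ) (m : ℕ) (S : Finset ℕ) (n : ℕ → ℕ) : ℕ :=
  let height : ℕ → ℝ := fun i => 1 / Λ i + (n i : ℝ) / m
  let T := S.filter fun i => ∀ j ∈ S, height i ≤ height j
  if h : T.Nonempty then T.min' h else 0

/-- The greedy block-filling allocation after `t` steps: start from the zero
allocation and at each step add one block to the channel in `S` of currently
lowest height, breaking ties by smallest index. -/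
noncomputable def greedyAlloc (Λ : ℕ → ℝ) (m : ℕ) (S : Finset ℕ) : ℕ → ℕ → ℕ
  | 0, _ => 0
  | t + 1, i =>
    greedyAlloc Λ m S t i + if i = greedyStep Λ m S (greedyAlloc Λ m S t) then 1 else 0

open scoped Classical in
lemma greedyStep_spec (Λ : ℕ → ℝ) (m : ℕ) (S : Finset ℕ) (hS : S.Nonempty) (n : ℕ → ℕ) :
    greedyStep Λ m S n ∈ S ∧
      ∀ j ∈ S, 1 / Λ (greedyStep Λ m S n) + (n (greedyStep Λ m S n) : ℝ) / m
        ≤ 1 / Λ j + (n j : ℝ) / m := by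
  classical
  obtain ⟨i0, hi0, hmin⟩ := S.exists_min_image (fun i => 1 / Λ i + (n i : ℝ) / m) hS
  have hT : (S.filter fun i => ∀ j ∈ S, (1 / Λ i + (n i : ℝ) / m) ≤ 1 / Λ j + (n j : ℝ) / m).Nonempty :=
    ⟨i0, Finset.mem_filter.2 ⟨hi0, hmin⟩⟩
  have hdef : greedyStep Λ m S n =
      (S.filter fun i => ∀ j ∈ S, (1 / Λ i + (n i : ℝ) / m) ≤ 1 / Λ j + (n j : ℝ) / m).min' hT := by
    simp only [greedyStep, dif_pos hT]
  have hmem := Finset.min'_mem _ hT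
  rw [hdef]
  exact ⟨(Finset.mem_filter.1 hmem).1, (Finset.mem_filter.1 hmem).2⟩

lemma greedyAlloc_succ (Λ : ℕ → ℝ) (m : ℕ) (S : Finset ℕ) (t i : ℕ) :
    greedyAlloc Λ m S (t + 1) i =
      greedyAlloc Λ m S t i + if i = greedyStep Λ m S (greedyAlloc Λ m S t) then 1 else 0 := rfl

lemma greedyAlloc_support (Λ : ℕ → ℝ) (m : ℕ) (S : Finset ℕ) (hS : S.Nonempty) :
    ∀ t i, i ∉ S → greedyAlloc Λ m S t i = 0 := by
  intro t
  induction t with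
  | zero => intro i _; rfl
  | succ t ih =>
    intro i hi
    rw [greedyAlloc_succ, ih i hi, if_neg, add_zero]
    intro h
    exact hi (h ▸ (greedyStep_spec Λ m S hS (greedyAlloc Λ m S t)).1)

lemma greedyAlloc_sum (Λ : ℕ → ℝ) (m : ℕ) (S : Finset ℕ) (hS : S.Nonempty) :
    ∀ t, ∑ i ∈ S, greedyAlloc Λ m S t i = t := by
  intro t
  induction t with
  | zero => simp [greedyAlloc]
  | succ t ih =>
    classical
    simp only [greedyAlloc_succ, Finset.sum_add_distrib, ih]
    rw [Finset.sum_ite_eq' S _ (fun _ => 1),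
      if_pos (greedyStep_spec Λ m S hS (greedyAlloc Λ m S t)).1]

lemma greedyAlloc_invariant (Λ : ℕ → ℝ) (m : ℕ) (S : Finset ℕ) (hS : S.Nonempty)
    (hm : 0 < m) :
    ∀ t, ∀ i ∈ S, ∀ j ∈ S, 1 ≤ greedyAlloc Λ m S t i →
      1 / Λ i + ((greedyAlloc Λ m S t i : ℝ) - 1) / m
        ≤ 1 / Λ j + (greedyAlloc Λ m S t j : ℝ) / m := by
  intro t
  induction t with
  | zero => intro i _ j _ h; simp [greedyAlloc] at h
  | succ t ih =>
    intro i hi j hj h1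
    obtain ⟨hsS, hsmin⟩ := greedyStep_spec Λ m S hS (greedyAlloc Λ m S t)
    set s := greedyStep Λ m S (greedyAlloc Λ m S t) with hs
    have hm' : (0:ℝ) < m := by exact_mod_cast hm
    have hjmono : (greedyAlloc Λ m S t j : ℝ) / m ≤ (greedyAlloc Λ m S (t+1) j : ℝ) / m := by
      apply div_le_div_of_nonneg_right _ (le_of_lt hm')
      exact_mod_cast (by rw [greedyAlloc_succ]; omega : greedyAlloc Λ m S t j ≤ greedyAlloc Λ m S (t+1) j)
    have hjmono' : 1 / Λ j + (greedyAlloc Λ m S t j : ℝ) / m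
        ≤ 1 / Λ j + (greedyAlloc Λ m S (t+1) j : ℝ) / m := by linarith
    by_cases hic : i = s
    · have h1' : (greedyAlloc Λ m S (t+1) i : ℝ) - 1 = (greedyAlloc Λ m S t i : ℝ) := by
        rw [greedyAlloc_succ, if_pos (hs ▸ hic)]; push_cast; ring
      rw [h1', hic]
      exact le_trans (hsmin j hj) hjmono'
    · have heq : greedyAlloc Λ m S (t+1) i = greedyAlloc Λ m S t i := by
        rw [greedyAlloc_succ, if_neg (hs ▸ hic), add_zero]
      rw [heq] at h1 ⊢
      exact le_trans (ih i hi j hj h1) hjmono'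


/-- **Greedy is optimal over a prescribed subset containing the top `r` channels.**
If `S ⊆ {1, ..., N}` contains `{1, ..., r}` (with `r` the Witsenhausen index of
`(Λ_1, ..., Λ_q)`, `q = min(m, N)`), then the greedy block-filling allocation on `S`
attains the maximum of `∏_{i=1}^N (1 + Λ_i n_i/m)` over all integer allocations of
`m` blocks supported on `S`. -/
theorem greedy_optimal_on_subset
    (N m : ℕ) (hN : 1 ≤ N) (hm : 1 ≤ m) (Λ : ℕ → ℝ)
    (hpos : ∀ i, 1 ≤ i → i ≤ N → 0 < Λ i)
    (hmono : ∀ i, 1 ≤ i → i + 1 ≤ N → Λ (i + 1) ≤ Λ i)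
    (q : ℕ) (hq : q = min m N)
    (r : ℕ) (hr1 : 1 ≤ r) (hrq : r ≤ q)
    (hup : ∀ k, 1 ≤ k → k ≤ r →
      1 / Λ k < (1 / (k : ℝ)) * (1 + ∑ j ∈ Finset.Icc 1 k, 1 / Λ j))
    (hdown : ∀ k, r < k → k ≤ q →
      (1 / (k : ℝ)) * (1 + ∑ j ∈ Finset.Icc 1 k, 1 / Λ j) ≤ 1 / Λ k)
    (S : Finset ℕ) (hSN : S ⊆ Finset.Icc 1 N) (hrS : Finset.Icc 1 r ⊆ S)
    (g : ℕ → ℕ) (hg : g = greedyAlloc Λ m S m) :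
    (∑ i ∈ Finset.Icc 1 N, g i = m) ∧ (∀ i, i ∉ S → g i = 0) ∧
    (∀ n : ℕ → ℕ, (∑ i ∈ Finset.Icc 1 N, n i = m) → (∀ i, i ∉ S → n i = 0) →
      ∏ i ∈ Finset.Icc 1 N, (1 + Λ i * (n i : ℝ) / m)
        ≤ ∏ i ∈ Finset.Icc 1 N, (1 + Λ i * (g i : ℝ) / m)) := by
  classical
  have hS : S.Nonempty := ⟨1, hrS (Finset.mem_Icc.2 ⟨le_refl 1, hr1⟩)⟩
  have hΛ : ∀ i ∈ Finset.Icc 1 N, 0 < Λ i := fun i hi =>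
    hpos i (Finset.mem_Icc.1 hi).1 (Finset.mem_Icc.1 hi).2
  have hm' : (0 : ℝ) < m := by exact_mod_cast hm
  have hgsupp : ∀ i, i ∉ S → g i = 0 := fun i hi => hg ▸ greedyAlloc_support Λ m S hS m i hi
  have hgsum : ∑ i ∈ Finset.Icc 1 N, g i = m := by
    rw [← Finset.sum_subset hSN (fun x _ hx => hgsupp x hx), hg]
    exact greedyAlloc_sum Λ m S hS m
  refine ⟨hgsum, hgsupp, ?_⟩
  have hij_split_sum : ∀ (i j : ℕ), i ≠ j → ∀ (F : Finset ℕ), i ∈ F → j ∈ F → ∀ f : ℕ → ℕ,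
      ∑ k ∈ F, f k = f i + f j + ∑ k ∈ (F.erase i).erase j, f k := by
    intro i j hij F hiF hjF f
    rw [← Finset.add_sum_erase F f hiF,
      ← Finset.add_sum_erase (F.erase i) f (Finset.mem_erase.2 ⟨Ne.symm hij, hjF⟩)]
    omega
  have hij_split_prod : ∀ (i j : ℕ), i ≠ j → ∀ (F : Finset ℕ), i ∈ F → j ∈ F → ∀ f : ℕ → ℝ,
      ∏ k ∈ F, f k = f i * f j * ∏ k ∈ (F.erase i).erase j, f k := by
    intro i j hij F hiF hjF f
    rw [← Finset.mul_prod_erase F f hiF,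
      ← Finset.mul_prod_erase (F.erase i) f (Finset.mem_erase.2 ⟨Ne.symm hij, hjF⟩), mul_assoc]
  have key : ∀ M : ℕ, ∀ n : ℕ → ℕ, (∑ i ∈ Finset.Icc 1 N, n i = m) → (∀ i, i ∉ S → n i = 0) →
      (∑ i ∈ S, (n i - g i)) = M →
      ∏ i ∈ Finset.Icc 1 N, (1 + Λ i * (n i : ℝ) / m)
        ≤ ∏ i ∈ Finset.Icc 1 N, (1 + Λ i * (g i : ℝ) / m) := by
    intro M
    induction M with
    | zero =>
      intro n hsum hsupp hM
      have hle : ∀ i ∈ S, n i ≤ g i := by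
        intro i hi
        have := (Finset.sum_eq_zero_iff.1 hM) i hi
        omega
      have hsums : ∑ i ∈ S, n i = ∑ i ∈ S, g i := by
        rw [Finset.sum_subset hSN (fun x _ hx => hsupp x hx),
          Finset.sum_subset hSN (fun x _ hx => hgsupp x hx), hsum, hgsum]
      have heq := (Finset.sum_eq_sum_iff_of_le hle).1 hsums
      apply le_of_eq
      apply Finset.prod_congr rfl
      intro i hi
      by_cases hiS : i ∈ S
      · rw [heq i hiS]
      · rw [hsupp i hiS, hgsupp i hiS]
    | succ M ih =>
      intro n hsum hsupp hM
      have hex_i : ∃ i ∈ S, g i < n i := by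
        by_contra hno
        push_neg at hno
        have : ∑ i ∈ S, (n i - g i) = 0 :=
          Finset.sum_eq_zero (fun i hi => by have := hno i hi; omega)
        omega
      obtain ⟨i, hiS, hi_gt⟩ := hex_i
      have hex_j : ∃ j ∈ S, n j < g j := by
        by_contra hno
        push_neg at hno
        have hsums : ∑ k ∈ S, g k = ∑ k ∈ S, n k := by
          rw [Finset.sum_subset hSN (fun x _ hx => hsupp x hx),
            Finset.sum_subset hSN (fun x _ hx => hgsupp x hx), hsum, hgsum]
        have := (Finset.sum_eq_sum_iff_of_le hno).1 hsums i hiS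
        omega
      obtain ⟨j, hjS, hj_lt⟩ := hex_j
      have hij : i ≠ j := by intro h; rw [h] at hi_gt; omega
      set n' : ℕ → ℕ := fun k => if k = i then n i - 1 else if k = j then n j + 1 else n k
        with hn'def
      have hn'i : n' i = n i - 1 := by simp [hn'def]
      have hn'j : n' j = n j + 1 := by simp [hn'def, Ne.symm hij]
      have hn'k : ∀ k, k ≠ i → k ≠ j → n' k = n k := by
        intro k h1 h2; simp [hn'def, h1, h2]
      have hiIcc : i ∈ Finset.Icc 1 N := hSN hiS
      have hjIcc : j ∈ Finset.Icc 1 N := hSN hjS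
      have tailn : ∑ k ∈ ((Finset.Icc 1 N).erase i).erase j, n' k
          = ∑ k ∈ ((Finset.Icc 1 N).erase i).erase j, n k :=
        Finset.sum_congr rfl (fun k hk => hn'k k
          (Finset.ne_of_mem_erase (Finset.mem_of_mem_erase hk)) (Finset.ne_of_mem_erase hk))
      have hsum' : ∑ k ∈ Finset.Icc 1 N, n' k = m := by
        rw [hij_split_sum i j hij _ hiIcc hjIcc n', tailn, hn'i, hn'j]
        rw [hij_split_sum i j hij _ hiIcc hjIcc n] at hsum
        omega
      have hsupp' : ∀ k, k ∉ S → n' k = 0 := by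
        intro k hk
        rw [hn'k k (fun h => hk (h ▸ hiS)) (fun h => hk (h ▸ hjS))]
        exact hsupp k hk
      have tailnS : ∑ k ∈ (S.erase i).erase j, (n' k - g k)
          = ∑ k ∈ (S.erase i).erase j, (n k - g k) :=
        Finset.sum_congr rfl (fun k hk => by
          rw [hn'k k (Finset.ne_of_mem_erase (Finset.mem_of_mem_erase hk))
            (Finset.ne_of_mem_erase hk)])
      have hM' : ∑ k ∈ S, (n' k - g k) = M := by
        rw [hij_split_sum i j hij S hiS hjS (fun k => n' k - g k)]
        rw [hij_split_sum i j hij S hiS hjS (fun k => n k - g k)] at hM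
        simp only [tailnS, hn'i, hn'j]
        omega
      have hΛi := hΛ i hiIcc
      have hΛj := hΛ j hjIcc
      have hginv := greedyAlloc_invariant Λ m S hS hm m j hjS i hiS
        (by rw [← hg]; omega : 1 ≤ greedyAlloc Λ m S m j)
      rw [← hg] at hginv
      have hba : 1 / Λ j + (n j : ℝ) / m ≤ 1 / Λ i + ((n i : ℝ) - 1) / m := by
        have e1 : ((n j : ℝ)) ≤ (g j : ℝ) - 1 := by
          have : (n j : ℝ) + 1 ≤ (g j : ℝ) := by exact_mod_cast hj_lt
          linarith
        have e2 : ((g i : ℝ)) ≤ (n i : ℝ) - 1 := by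
          have : (g i : ℝ) + 1 ≤ (n i : ℝ) := by exact_mod_cast hi_gt
          linarith
        have d1 : (n j : ℝ) / m ≤ ((g j : ℝ) - 1) / m :=
          div_le_div_of_nonneg_right e1 (le_of_lt hm')
        have d2 : ((g i : ℝ)) / m ≤ ((n i : ℝ) - 1) / m :=
          div_le_div_of_nonneg_right e2 (le_of_lt hm')
        linarith [hginv, d1, d2]
      have hΛi0 : Λ i ≠ 0 := ne_of_gt hΛi
      have hΛj0 : Λ j ≠ 0 := ne_of_gt hΛj
      have hm0 : (m : ℝ) ≠ 0 := ne_of_gt hm'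
      have hfac : (1 + Λ i * (n i : ℝ) / m) * (1 + Λ j * (n j : ℝ) / m)
          ≤ (1 + Λ i * ((n i : ℝ) - 1) / m) * (1 + Λ j * ((n j : ℝ) + 1) / m) := by
        have hid : (1 + Λ i * ((n i : ℝ) - 1) / m) * (1 + Λ j * ((n j : ℝ) + 1) / m)
            - (1 + Λ i * (n i : ℝ) / m) * (1 + Λ j * (n j : ℝ) / m)
            = (Λ i * Λ j) * ((1 / Λ i + ((n i : ℝ) - 1) / m) - (1 / Λ j + (n j : ℝ) / m)) / m := by
          field_simp
          ring
        have hnn : (0:ℝ) ≤ (Λ i * Λ j) * ((1 / Λ i + ((n i : ℝ) - 1) / m)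
            - (1 / Λ j + (n j : ℝ) / m)) / m :=
          div_nonneg (mul_nonneg (le_of_lt (mul_pos hΛi hΛj)) (sub_nonneg.2 hba)) (le_of_lt hm')
        linarith [hid, hnn]
      have hci : ((n' i : ℕ) : ℝ) = (n i : ℝ) - 1 := by
        rw [hn'i, Nat.cast_sub (by omega : 1 ≤ n i)]; norm_num
      have hcj : ((n' j : ℕ) : ℝ) = (n j : ℝ) + 1 := by
        rw [hn'j]; push_cast; ring
      have tailp : ∏ k ∈ ((Finset.Icc 1 N).erase i).erase j, (1 + Λ k * (n' k : ℝ) / m)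
          = ∏ k ∈ ((Finset.Icc 1 N).erase i).erase j, (1 + Λ k * (n k : ℝ) / m) :=
        Finset.prod_congr rfl (fun k hk => by
          rw [hn'k k (Finset.ne_of_mem_erase (Finset.mem_of_mem_erase hk))
            (Finset.ne_of_mem_erase hk)])
      have hrest : (0:ℝ) ≤ ∏ k ∈ ((Finset.Icc 1 N).erase i).erase j,
          (1 + Λ k * (n k : ℝ) / m) := by
        apply Finset.prod_nonneg
        intro k hk
        have hkIcc : k ∈ Finset.Icc 1 N := Finset.mem_of_mem_erase (Finset.mem_of_mem_erase hk)
        have := hΛ k hkIcc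
        positivity
      have hstep : ∏ k ∈ Finset.Icc 1 N, (1 + Λ k * (n k : ℝ) / m)
          ≤ ∏ k ∈ Finset.Icc 1 N, (1 + Λ k * (n' k : ℝ) / m) := by
        rw [hij_split_prod i j hij _ hiIcc hjIcc (fun k => 1 + Λ k * (n k : ℝ) / m),
          hij_split_prod i j hij _ hiIcc hjIcc (fun k => 1 + Λ k * (n' k : ℝ) / m),
          tailp]
        apply mul_le_mul_of_nonneg_right _ hrest
        rw [hci, hcj]
        exact hfac
      exact le_trans hstep (ih n' hsum' hsupp' hM')
  intro n hsum hsupp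
  exact key _ n hsum hsupp rfl
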